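/- Let F(x, ·) be concave and differentiable on convex compact Y, F(·, y) L-weakly convex on closed convex X, ∇_y F jointly L-Lipschitz, r > L. Define d_r(y, z) = min_{x∈X}{F(x,y) + (r/2)‖x − z‖²}, x_r(y, z) the minimizer, and y₊(z) = proj_Y(y + α∇_y F(x_r(y, z), y)) with α > 0. Let x_r*(z) = argmin_{x∈X} max_{y∈Y}{F(x,y) + (r/2)‖x−z‖²} and y(z) ∈ argmax_{y∈Y} d_r(y, z). Then (r − L)‖x_r*(z) − x_r(y₊(z), z)‖² ≤ (1/α + Lσ₂ + L)·diam(Y)·‖y − y₊(z)‖, where σ₂ = 2(r+L)/(r−L). -/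

import Mathlib

open scoped RealInnerProductSpace

section helpers
variable {E : Type*} [NormedAddCommGroup E] [InnerProductSpace ℝ E]

lemma combo_norm_sq (a b : E) (t : ℝ) :
    ‖t•a + (1-t)•b‖^2 = t*‖a‖^2 + (1-t)*‖b‖^2 - t*(1-t)*‖a-b‖^2 := by
  simp only [← real_inner_self_eq_norm_sq, inner_add_add_self, inner_sub_sub_self,
    real_inner_smul_left, real_inner_smul_right]
  ring

lemma min_strong {X : Set E} (hXc : Convex ℝ X) {f : E → ℝ} {μ : ℝ} {x₀ : E}
    (hx₀ : x₀ ∈ X) (hmin : IsMinOn f X x₀)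
    (hcombo : ∀ x₁ ∈ X, ∀ t ∈ Set.Ioo (0:ℝ) 1,
      f (t • x₁ + (1-t) • x₀) ≤ t * f x₁ + (1-t) * f x₀ - μ/2*(t*(1-t))*‖x₁ - x₀‖^2)
    {x : E} (hx : x ∈ X) :
    f x₀ + μ/2 * ‖x - x₀‖^2 ≤ f x := by
  set D := ‖x - x₀‖^2 with hD
  have key : ∀ t ∈ Set.Ioo (0:ℝ) 1, f x₀ ≤ f x - μ/2*(1-t)*D := by
    intro t ht
    have hmem : t • x + (1-t) • x₀ ∈ X := hXc hx hx₀ ht.1.le (by linarith [ht.2]) (by ring)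
    have h1 : f x₀ ≤ f (t • x + (1-t) • x₀) := hmin hmem
    have h2 := hcombo x hx t ht
    rw [← hD] at h2
    have h3 : t * (f x₀ + μ/2*(1-t)*D) ≤ t * (f x) := by nlinarith
    have := (mul_le_mul_iff_right₀ ht.1).mp h3
    linarith
  have htend : Filter.Tendsto (fun t : ℝ => f x - μ/2*(1-t)*D) (nhdsWithin 0 (Set.Ioi 0))
      (nhds (f x - μ/2*(1-(0:ℝ))*D)) := by
    apply Filter.Tendsto.mono_left _ nhdsWithin_le_nhds
    exact (Continuous.tendsto (by continuity) 0)
  have hev : ∀ᶠ t in nhdsWithin (0:ℝ) (Set.Ioi 0), f x₀ ≤ f x - μ/2*(1-t)*D := by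
    filter_upwards [Ioo_mem_nhdsGT_of_mem
      (by constructor <;> norm_num : (0:ℝ) ∈ Set.Ico (0:ℝ) 1)] with t ht
    exact key t ht
  have := ge_of_tendsto htend hev
  simp only [sub_zero] at this
  linarith

lemma concave_grad [CompleteSpace E] {Y : Set E} {f : E → ℝ} {G y₀ y' : E}
    (hf : ConcaveOn ℝ Y f) (hg : HasGradientAt f G y₀)
    (h0 : y₀ ∈ Y) (h1 : y' ∈ Y) : f y' - f y₀ ≤ ⟪G, y' - y₀⟫ := by
  set v := y' - y₀ with hv
  have hc : HasDerivAt (fun t : ℝ => y₀ + t • v) v 0 := by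
    simpa using ((hasDerivAt_id (0:ℝ)).smul_const v).const_add y₀
  have hc0 : (fun t : ℝ => y₀ + t • v) 0 = y₀ := by simp
  have hD : HasDerivAt (fun t : ℝ => f (y₀ + t • v)) ⟪G, v⟫ 0 := by
    have h := HasFDerivAt.comp_hasDerivAt (x := (0:ℝ))
      (hc0.symm ▸ hg.hasFDerivAt) hc
    simp [Function.comp, InnerProductSpace.toDual_apply_apply] at h
    exact h
  have hslope : ∀ t ∈ Set.Ioo (0:ℝ) 1,
      f y' - f y₀ ≤ (f (y₀ + t • v) - f y₀) / t := by
    intro t ht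
    have hcomb : y₀ + t • v = (1-t) • y₀ + t • y' := by
      rw [hv]; module
    have h2 := hf.2 h0 h1 (by linarith [ht.2] : (0:ℝ) ≤ 1 - t) ht.1.le (by ring)
    rw [← hcomb] at h2
    simp only [smul_eq_mul] at h2
    rw [le_div_iff₀ ht.1]
    linarith
  have htend : Filter.Tendsto (slope (fun t : ℝ => f (y₀ + t • v)) 0)
      (nhdsWithin 0 (Set.Ioi 0)) (nhds ⟪G, v⟫) :=
    (hasDerivAt_iff_tendsto_slope.mp hD).mono_left
      (nhdsWithin_mono _ fun t ht => ne_of_gt ht)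
  have hev : ∀ᶠ t in nhdsWithin (0:ℝ) (Set.Ioi 0),
      f y' - f y₀ ≤ slope (fun t : ℝ => f (y₀ + t • v)) 0 t := by
    filter_upwards [Ioo_mem_nhdsGT_of_mem
      (by constructor <;> norm_num : (0:ℝ) ∈ Set.Ico (0:ℝ) 1)] with t ht
    simpa [slope_def_field, div_eq_mul_inv] using hslope t ht
  exact ge_of_tendsto htend hev

end helpers

lemma quad_aux {L r : ℝ} (hr : L < r) (hL0 : 0 ≤ L) :
    ∀ δ η : ℝ, 0 ≤ δ → 0 < η → (r-L)*δ^2 ≤ L*(δ+η)*η → δ*(r-L) ≤ 2*(r+L)*η := by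
  intro δ η hδ hη hq
  rcases eq_or_lt_of_le hδ with h0 | hδpos
  · nlinarith
  by_contra hcon
  push_neg at hcon
  have q1' : (2*r+L)*δ*η < L*η*η := by
    nlinarith [mul_lt_mul_of_pos_right hcon hδpos]
  have q1 : (2*r+L)*δ < L*η := lt_of_mul_lt_mul_right q1' hη.le
  have q3 := mul_lt_mul'' q1 hcon (mul_nonneg (by linarith) hδ)
    (mul_nonneg (by linarith) hη.le)
  have hpoly : (0:ℝ) < 4*r^2+5*r*L+3*L^2 := by nlinarith
  nlinarith [q3, mul_pos hδpos hη, hpoly, mul_pos (mul_pos hδpos hη) hpoly]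

set_option maxHeartbeats 2000000 in
/-- Dual error bound for the general concave case:
`(r-L)‖x_r*(z) - x_r(y₊(z),z)‖² ≤ (1/α + Lσ₂ + L)·diam(Y)·‖y - y₊(z)‖`,
with `σ₂ = 2(r+L)/(r-L)`. -/
theorem dual_error_bound_concave (n d : ℕ)
    (X : Set (EuclideanSpace ℝ (Fin n))) (Y : Set (EuclideanSpace ℝ (Fin d)))
    (F : EuclideanSpace ℝ (Fin n) → EuclideanSpace ℝ (Fin d) → ℝ)
    (Gy : EuclideanSpace ℝ (Fin n) → EuclideanSpace ℝ (Fin d) → EuclideanSpace ℝ (Fin d))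
    (L r α : ℝ) (z : EuclideanSpace ℝ (Fin n)) (y : EuclideanSpace ℝ (Fin d))
    (xr : EuclideanSpace ℝ (Fin d) → EuclideanSpace ℝ (Fin n))
    (yplus ybar : EuclideanSpace ℝ (Fin d))
    (xstar : EuclideanSpace ℝ (Fin n))
    (φ : EuclideanSpace ℝ (Fin n) → ℝ)
    (hX : IsClosed X) (hXc : Convex ℝ X)
    (hYcomp : IsCompact Y) (hYc : Convex ℝ Y)
    (hr : L < r) (hα : 0 < α)
    (hwc : ∀ y' ∈ Y, ConvexOn ℝ X (fun x => F x y' + L / 2 * ‖x‖ ^ 2))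
    (hconc : ∀ x ∈ X, ConcaveOn ℝ Y (fun y' => F x y'))
    (hgrad : ∀ x y', HasGradientAt (F x) (Gy x y') y')
    (hlip : ∀ x x' y' y'', ‖Gy x y' - Gy x' y''‖ ≤
      L * Real.sqrt (‖x - x'‖ ^ 2 + ‖y' - y''‖ ^ 2))
    (hxr : ∀ y' ∈ Y, xr y' ∈ X ∧
      IsMinOn (fun x => F x y' + r / 2 * ‖x - z‖ ^ 2) X (xr y'))
    (hybar : ybar ∈ Y ∧ ∀ y' ∈ Y,
      F (xr y') y' + r / 2 * ‖xr y' - z‖ ^ 2 ≤ F (xr ybar) ybar + r / 2 * ‖xr ybar - z‖ ^ 2)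
    (hy : y ∈ Y)
    (hyplus : yplus ∈ Y ∧ ∀ w ∈ Y, ⟪y + α • Gy (xr y) y - yplus, w - yplus⟫ ≤ 0)
    (hφ : ∀ x ∈ X, IsLUB {s | ∃ y' ∈ Y, s = F x y' + r / 2 * ‖x - z‖ ^ 2} (φ x))
    (hxstar : xstar ∈ X ∧ IsMinOn φ X xstar) :
    (r - L) * ‖xstar - xr yplus‖ ^ 2 ≤
      (1 / α + L * (2 * (r + L) / (r - L)) + L) * Metric.diam Y * ‖y - yplus‖ := by
  obtain ⟨hyplusY, hproj⟩ := hyplus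
  obtain ⟨hxstarX, hxstarmin⟩ := hxstar
  obtain ⟨hxhatX, hxhatmin⟩ := hxr yplus hyplusY
  obtain ⟨hxyX, hxymin⟩ := hxr y hy
  have hμ : (0:ℝ) < r - L := by linarith
  -- strong convexity (combination form) of ψ_{y'}(x) = F x y' + r/2 ‖x-z‖²
  have hpsi_combo : ∀ y' ∈ Y, ∀ x₁ ∈ X, ∀ x₂ ∈ X, ∀ t ∈ Set.Ioo (0:ℝ) 1,
      F (t•x₁+(1-t)•x₂) y' + r/2*‖t•x₁+(1-t)•x₂ - z‖^2 ≤
        t*(F x₁ y' + r/2*‖x₁-z‖^2) + (1-t)*(F x₂ y' + r/2*‖x₂-z‖^2)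
          - (r-L)/2*(t*(1-t))*‖x₁-x₂‖^2 := by
    intro y' hy' x₁ hx₁ x₂ hx₂ t ht
    have hcv := (hwc y' hy').2 hx₁ hx₂ ht.1.le (by linarith [ht.2] : (0:ℝ) ≤ 1 - t) (by ring)
    simp only [smul_eq_mul] at hcv
    have e1 : ‖t•x₁+(1-t)•x₂‖^2 = t*‖x₁‖^2+(1-t)*‖x₂‖^2 - t*(1-t)*‖x₁-x₂‖^2 :=
      combo_norm_sq x₁ x₂ t
    have e2 : ‖t•x₁+(1-t)•x₂ - z‖^2
        = t*‖x₁-z‖^2+(1-t)*‖x₂-z‖^2 - t*(1-t)*‖x₁-x₂‖^2 := by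
      have h : t•x₁+(1-t)•x₂ - z = t•(x₁ - z)+(1-t)•(x₂ - z) := by module
      rw [h]
      have h2 := combo_norm_sq (x₁ - z) (x₂ - z) t
      rw [sub_sub_sub_cancel_right] at h2
      exact h2
    rw [e1] at hcv
    rw [e2]
    nlinarith [hcv]
  -- strong minimality for ψ_{y'}
  have hpsi_min : ∀ y' ∈ Y, ∀ x ∈ X,
      (F (xr y') y' + r/2*‖xr y' - z‖^2) + (r-L)/2 * ‖x - xr y'‖^2
        ≤ F x y' + r/2*‖x - z‖^2 := by
    intro y' hy' x hx
    obtain ⟨hmem, hmin⟩ := hxr y' hy'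
    have := min_strong (μ := r - L) hXc hmem hmin
      (fun x₁ hx₁ t ht => hpsi_combo y' hy' x₁ hx₁ _ hmem t ht) hx
    simpa using this
  -- φ facts
  have hφub : ∀ x ∈ X, ∀ y' ∈ Y, F x y' + r/2*‖x - z‖^2 ≤ φ x := by
    intro x hx y' hy'
    exact (hφ x hx).1 ⟨y', hy', rfl⟩
  have hφ_combo : ∀ x₁ ∈ X, ∀ t ∈ Set.Ioo (0:ℝ) 1,
      φ (t•x₁+(1-t)•xstar) ≤ t*φ x₁ + (1-t)*φ xstar
        - (r-L)/2*(t*(1-t))*‖x₁-xstar‖^2 := by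
    intro x₁ hx₁ t ht
    have hmem : t•x₁+(1-t)•xstar ∈ X :=
      hXc hx₁ hxstarX ht.1.le (by linarith [ht.2]) (by ring)
    apply (hφ _ hmem).2
    rintro s ⟨y', hy', rfl⟩
    have h1 := hpsi_combo y' hy' x₁ hx₁ xstar hxstarX t ht
    have h2 := hφub x₁ hx₁ y' hy'
    have h3 := hφub xstar hxstarX y' hy'
    nlinarith [mul_le_mul_of_nonneg_left h2 ht.1.le,
      mul_le_mul_of_nonneg_left h3 (by linarith [ht.2] : (0:ℝ) ≤ 1 - t)]
  have hφ_min : ∀ x ∈ X, φ xstar + (r-L)/2 * ‖x - xstar‖^2 ≤ φ x :=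
    fun x hx => min_strong (μ := r - L) hXc hxstarX hxstarmin hφ_combo hx
  -- key inequality
  have hkey : (r-L) * ‖xstar - xr yplus‖^2 ≤
      φ (xr yplus) - (F (xr yplus) yplus + r/2*‖xr yplus - z‖^2) := by
    have h1 := hpsi_min yplus hyplusY xstar hxstarX
    have h2 := hφ_min (xr yplus) hxhatX
    have h3 := hφub xstar hxstarX yplus hyplusY
    rw [norm_sub_rev (xr yplus) xstar] at h2
    linarith
  by_cases hcase : y = yplus
  · -- η = 0 case
    subst hcase
    have hG : ∀ y' ∈ Y, ⟪Gy (xr y) y, y' - y⟫ ≤ 0 := by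
      intro y' hy'
      have hp := hproj y' hy'
      rw [add_sub_cancel_left, real_inner_smul_left] at hp
      nlinarith
    have hsup : φ (xr y) ≤ F (xr y) y + r/2*‖xr y - z‖^2 := by
      apply (hφ _ hxhatX).2
      rintro s ⟨y', hy', rfl⟩
      have hcg := concave_grad (hconc (xr y) hxhatX) (hgrad (xr y) y) hy hy'
      have := hG y' hy'
      linarith
    simp only [sub_self, norm_zero, mul_zero]
    nlinarith [hkey, hsup]
  · -- η > 0 case
    have hηpos : 0 < ‖y - yplus‖ := by
      rw [norm_pos_iff]; exact sub_ne_zero_of_ne hcase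
    have hL0 : (0:ℝ) ≤ L := by
      have h := hlip (xr y) (xr y) y yplus
      have hs : Real.sqrt (‖xr y - xr y‖^2 + ‖y - yplus‖^2) = ‖y - yplus‖ := by
        rw [sub_self, norm_zero,
          show (0:ℝ)^2 + ‖y - yplus‖^2 = ‖y - yplus‖^2 by ring]
        exact Real.sqrt_sq (norm_nonneg _)
      rw [hs] at h
      nlinarith [norm_nonneg (Gy (xr y) y - Gy (xr y) yplus)]
    have hsqrt : ∀ a b : ℝ, 0 ≤ a → 0 ≤ b → Real.sqrt (a^2+b^2) ≤ a + b := by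
      intro a b ha hb
      have h1 : a^2+b^2 ≤ (a+b)^2 := by nlinarith
      calc Real.sqrt (a^2+b^2) ≤ Real.sqrt ((a+b)^2) := Real.sqrt_le_sqrt h1
        _ = a+b := Real.sqrt_sq (by linarith)
    have hδ0 : (0:ℝ) ≤ ‖xr yplus - xr y‖ := norm_nonneg _
    -- Lipschitz bound on the gradient difference
    have hlipb : ‖Gy (xr yplus) yplus - Gy (xr y) y‖ ≤
        L * (‖xr yplus - xr y‖ + ‖y - yplus‖) := by
      have h := hlip (xr yplus) (xr y) yplus y
      have h2 : Real.sqrt (‖xr yplus - xr y‖^2 + ‖yplus - y‖^2) ≤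
          ‖xr yplus - xr y‖ + ‖y - yplus‖ := by
        rw [norm_sub_rev yplus y]
        exact hsqrt _ _ (norm_nonneg _) (norm_nonneg _)
      calc ‖Gy (xr yplus) yplus - Gy (xr y) y‖
          ≤ L * Real.sqrt (‖xr yplus - xr y‖^2 + ‖yplus - y‖^2) := h
        _ ≤ L * (‖xr yplus - xr y‖ + ‖y - yplus‖) :=
            mul_le_mul_of_nonneg_left h2 hL0
    -- Lipschitz property of xr : (r-L)δ² ≤ L(δ+η)η
    have hquad : (r-L) * ‖xr yplus - xr y‖^2 ≤
        L*(‖xr yplus - xr y‖+‖y - yplus‖)*‖y - yplus‖ := by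
      have hstep1 := hpsi_min y hy (xr yplus) hxhatX
      have hstep2 := hpsi_min yplus hyplusY (xr y) hxyX
      rw [norm_sub_rev (xr y) (xr yplus)] at hstep2
      have hc1 := concave_grad (hconc (xr yplus) hxhatX) (hgrad (xr yplus) yplus) hyplusY hy
      have hc2 := concave_grad (hconc (xr y) hxyX) (hgrad (xr y) y) hy hyplusY
      have hinner : ⟪Gy (xr yplus) yplus, y - yplus⟫ + ⟪Gy (xr y) y, yplus - y⟫
          = ⟪Gy (xr yplus) yplus - Gy (xr y) y, y - yplus⟫ := by
        rw [inner_sub_left]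
        have h : (yplus - y : EuclideanSpace ℝ (Fin d)) = -(y - yplus) := by abel
        rw [h, inner_neg_right]
        ring
      have hCS : ⟪Gy (xr yplus) yplus - Gy (xr y) y, y - yplus⟫ ≤
          ‖Gy (xr yplus) yplus - Gy (xr y) y‖ * ‖y - yplus‖ := real_inner_le_norm _ _
      have ht1 : ‖Gy (xr yplus) yplus - Gy (xr y) y‖ * ‖y - yplus‖ ≤
          L*(‖xr yplus - xr y‖+‖y - yplus‖)*‖y - yplus‖ :=
        mul_le_mul_of_nonneg_right hlipb (norm_nonneg _)
      linarith
    -- δ ≤ σ₂ η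
    have hσ : ‖xr yplus - xr y‖ ≤ 2*(r+L)/(r-L) * ‖y - yplus‖ := by
      rw [div_mul_eq_mul_div, le_div_iff₀ hμ]
      exact quad_aux hr hL0 _ _ hδ0 hηpos hquad
    -- the sup bound
    have hd0 : (0:ℝ) ≤ Metric.diam Y := Metric.diam_nonneg
    have hfinal : φ (xr yplus) ≤ F (xr yplus) yplus + r/2*‖xr yplus - z‖^2
        + (1 / α + L * (2 * (r + L) / (r - L)) + L) * Metric.diam Y * ‖y - yplus‖ := by
      apply (hφ _ hxhatX).2
      rintro s ⟨y', hy', rfl⟩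
      have hcg := concave_grad (hconc (xr yplus) hxhatX) (hgrad (xr yplus) yplus) hyplusY hy'
      have hsplit : ⟪Gy (xr yplus) yplus, y' - yplus⟫ =
          ⟪Gy (xr yplus) yplus - Gy (xr y) y, y' - yplus⟫ + ⟪Gy (xr y) y, y' - yplus⟫ := by
        rw [inner_sub_left]; ring
      have hwdiam : ‖y' - yplus‖ ≤ Metric.diam Y := by
        rw [← dist_eq_norm]
        exact Metric.dist_le_diam_of_mem hYcomp.isBounded hy' hyplusY
      -- term 2 : projection
      have hp := hproj y' hy'
      have hrw : (y + α • Gy (xr y) y - yplus : EuclideanSpace ℝ (Fin d))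
          = (α • Gy (xr y) y) - (yplus - y) := by abel
      rw [hrw, inner_sub_left, real_inner_smul_left] at hp
      have hp3 : ⟪yplus - y, y' - yplus⟫ ≤ ‖y - yplus‖ * Metric.diam Y := by
        calc ⟪yplus - y, y' - yplus⟫ ≤ ‖yplus - y‖ * ‖y' - yplus‖ := real_inner_le_norm _ _
          _ = ‖y - yplus‖ * ‖y' - yplus‖ := by rw [norm_sub_rev]
          _ ≤ ‖y - yplus‖ * Metric.diam Y :=
              mul_le_mul_of_nonneg_left hwdiam (norm_nonneg _)
      have hterm2 : ⟪Gy (xr y) y, y' - yplus⟫ ≤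
          (‖y - yplus‖ * Metric.diam Y) / α := by
        rw [le_div_iff₀ hα]
        nlinarith [hp, hp3]
      -- term 1
      have hterm1 : ⟪Gy (xr yplus) yplus - Gy (xr y) y, y' - yplus⟫ ≤
          L * (2*(r+L)/(r-L) * ‖y - yplus‖ + ‖y - yplus‖) * Metric.diam Y := by
        have hA : ⟪Gy (xr yplus) yplus - Gy (xr y) y, y' - yplus⟫ ≤
            ‖Gy (xr yplus) yplus - Gy (xr y) y‖ * ‖y' - yplus‖ := real_inner_le_norm _ _
        have hB : ‖Gy (xr yplus) yplus - Gy (xr y) y‖ * ‖y' - yplus‖ ≤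
            (L * (‖xr yplus - xr y‖ + ‖y - yplus‖)) * Metric.diam Y :=
          mul_le_mul hlipb hwdiam (norm_nonneg _)
            (mul_nonneg hL0 (by positivity))
        have hC : (L * (‖xr yplus - xr y‖ + ‖y - yplus‖)) * Metric.diam Y ≤
            L * (2*(r+L)/(r-L) * ‖y - yplus‖ + ‖y - yplus‖) * Metric.diam Y := by
          apply mul_le_mul_of_nonneg_right _ hd0
          apply mul_le_mul_of_nonneg_left _ hL0
          linarith [hσ]
        linarith
      have hring : L * (2*(r+L)/(r-L) * ‖y - yplus‖ + ‖y - yplus‖) * Metric.diam Y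
          + (‖y - yplus‖ * Metric.diam Y) / α
          = (1 / α + L * (2 * (r + L) / (r - L)) + L) * Metric.diam Y * ‖y - yplus‖ := by
        field_simp
        ring
      linarith [hcg, hterm1, hterm2]
    linarith [hkey, hfinal]
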